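/- For all real numbers x, y with 0 < x < 1, 0 < y < 1 and x ≠ y, one has ∫_0^1 log(1−t) / ((1−tx)(1−ty)) dt = (1/(x−y)) · ( (1/2)·log(1−y)² − (1/2)·log(1−x)² − Li_2(x) + Li_2(y) ). -/

import Mathlib

open Real Filter MeasureTheory intervalIntegral Set Topology

/-- The polylogarithm `Li_s(z) = Σ_{k ≥ 1} z^k / k^s`. -/
noncomputable def Li (s : ℕ) (z : ℝ) : ℝ := ∑' k : ℕ, z ^ (k + 1) / ((k : ℝ) + 1) ^ s


lemma Li2_zero : Li 2 0 = 0 := by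
  simp [Li]

lemma hasDerivAt_Li2 {z : ℝ} (hz : |z| < 1) :
    HasDerivAt (Li 2) (∑' k : ℕ, z ^ k / ((k : ℝ) + 1)) z := by
  set r : ℝ := (|z| + 1) / 2 with hr
  have hr0 : 0 ≤ r := by positivity
  have hzr : |z| < r := by rw [hr]; linarith
  have hr1 : r < 1 := by rw [hr]; linarith
  apply hasDerivAt_tsum_of_isPreconnected (u := fun n : ℕ => r ^ n)
      (g' := fun (n : ℕ) (y : ℝ) => y ^ n / ((n : ℝ) + 1))
      (summable_geometric_of_lt_one hr0 hr1)
      (Metric.isOpen_ball (x := (0:ℝ)) (ε := r))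
      ((convex_ball (0:ℝ) r).isPreconnected) ?_ ?_
      (y₀ := 0) ?_ ?_ ?_
  · intro n y _
    have h := (hasDerivAt_pow (n + 1) y).div_const (((n : ℝ) + 1) ^ 2)
    convert h using 1
    · rfl
    have hn : ((n : ℝ) + 1) ≠ 0 := by positivity
    push_cast
    field_simp
  · intro n y hy
    have hy' : |y| ≤ r := by
      have := mem_ball_iff_norm.mp hy
      simp only [sub_zero, Real.norm_eq_abs] at this
      linarith
    have h1 : ‖y ^ n / ((n : ℝ) + 1)‖ ≤ ‖y ^ n‖ := by
      rw [norm_div]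
      apply div_le_self (norm_nonneg _)
      simp only [Real.norm_eq_abs]
      rw [abs_of_nonneg (by positivity)]
      linarith
    refine h1.trans ?_
    simp only [Real.norm_eq_abs, abs_pow]
    exact pow_le_pow_left₀ (abs_nonneg _) hy' n
  · exact Metric.mem_ball_self (by rw [hr]; positivity)
  · apply Summable.congr summable_zero
    intro n; simp
  · simpa [Real.norm_eq_abs] using hzr

lemma hasDerivAt_Li2' {z : ℝ} (h0 : 0 < z) (h1 : z < 1) :
    HasDerivAt (Li 2) (-Real.log (1 - z) / z) z := by
  have hz : |z| < 1 := by rw [abs_of_pos h0]; exact h1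
  have h := hasDerivAt_Li2 hz
  have hs : HasSum (fun n : ℕ => z ^ (n + 1) / ((n : ℝ) + 1)) (-Real.log (1 - z)) :=
    Real.hasSum_pow_div_log_of_abs_lt_one hz
  have key : (∑' k : ℕ, z ^ k / ((k : ℝ) + 1)) = -Real.log (1 - z) / z := by
    have h2 : (∑' k : ℕ, z * (z ^ k / ((k : ℝ) + 1))) = -Real.log (1 - z) := by
      rw [← hs.tsum_eq]
      congr 1; funext k; rw [pow_succ]; ring
    rw [tsum_mul_left] at h2
    field_simp
    linarith [h2]
  rwa [key] at h

open Real Filter MeasureTheory intervalIntegral Set Topology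

lemma intInt_log01 : IntervalIntegrable Real.log volume 0 1 := by
  rw [intervalIntegrable_iff_integrableOn_Ioc_of_le zero_le_one]
  have hg : IntegrableOn (fun t : ℝ => 2 * t ^ (-(1/2) : ℝ)) (Ioc 0 1) volume := by
    have := (intervalIntegral.intervalIntegrable_rpow' (a := 0) (b := 1)
      (r := -(1/2)) (by norm_num)).const_mul 2
    rwa [intervalIntegrable_iff_integrableOn_Ioc_of_le zero_le_one] at this
  refine hg.integrable.mono' (Real.measurable_log.aestronglyMeasurable.restrict) ?_
  filter_upwards [ae_restrict_mem measurableSet_Ioc] with t ht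
  obtain ⟨ht0, ht1⟩ := ht
  have h := Real.abs_log_mul_self_rpow_lt t (1/2) ht0 ht1 (by norm_num)
  rw [Real.norm_eq_abs]
  have hpos : (0:ℝ) < t ^ ((1:ℝ)/2) := Real.rpow_pos_of_pos ht0 _
  have h2 : |Real.log t| * t ^ ((1:ℝ)/2) < 2 := by
    calc |Real.log t| * t ^ ((1:ℝ)/2) = |Real.log t * t ^ ((1:ℝ)/2)| := by
          rw [abs_mul, abs_of_pos hpos]
      _ < 1 / (1/2) := h
      _ = 2 := by norm_num
    
  have key : |Real.log t| < 2 * t ^ (-(1/2) : ℝ) := by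
    have ht' : t ^ (-(1/2) : ℝ) = (t ^ ((1:ℝ)/2))⁻¹ := by
      rw [← Real.rpow_neg ht0.le]
    have h4 : 2 * (t ^ ((1:ℝ)/2))⁻¹ = 2 / t ^ ((1:ℝ)/2) := (div_eq_mul_inv 2 _).symm
    rw [ht', h4, lt_div_iff₀ hpos]
    exact h2
  linarith

lemma intInt_log1sub : IntervalIntegrable (fun t : ℝ => Real.log (1 - t)) volume 0 1 := by
  have := intInt_log01.comp_sub_left 1
  have h2 := this.symm
  simpa using h2

lemma intInt_aux (x : ℝ) (hx0 : 0 < x) (hx1 : x < 1) :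
    IntervalIntegrable (fun t => Real.log (1 - t) * (x / (1 - t * x))) volume 0 1 := by
  apply intInt_log1sub.mul_continuousOn
  rw [uIcc_of_le zero_le_one]
  apply ContinuousOn.div continuousOn_const (by fun_prop)
  intro t ht
  have : 0 < 1 - t * x := by nlinarith [ht.1, ht.2, mul_nonneg hx0.le (sub_nonneg.mpr ht.2)]
  exact this.ne'

lemma key (x : ℝ) (hx0 : 0 < x) (hx1 : x < 1) :
    ∫ t in (0:ℝ)..1, Real.log (1 - t) * (x / (1 - t * x)) =
      -(1/2) * Real.log (1 - x) ^ 2 - Li 2 x := by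
  have h1x : (0:ℝ) < 1 - x := by linarith
  set L := Real.log (1 - x) with hL
  set Φ : ℝ → ℝ := fun t => Real.log (1 - t) * (L - Real.log (1 - t * x))
      + Li 2 (x * (1 - t) / (1 - t * x)) - L * Real.log (1 - t * x)
      + (1/2) * Real.log (1 - t * x) ^ 2 with hΦdef
  have hden : ∀ t ∈ Icc (0:ℝ) 1, (0:ℝ) < 1 - t * x := by
    intro t ht; nlinarith [ht.1, ht.2, mul_nonneg hx0.le (sub_nonneg.mpr ht.2)]
  have hwmem : ∀ t ∈ Icc (0:ℝ) 1, |x * (1 - t) / (1 - t * x)| < 1 := by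
    intro t ht
    have h0w : 0 ≤ x * (1 - t) / (1 - t * x) :=
      div_nonneg (mul_nonneg hx0.le (by linarith [ht.2])) (hden t ht).le
    have hwle : x * (1 - t) / (1 - t * x) ≤ x := by
      rw [div_le_iff₀ (hden t ht)]
      nlinarith [mul_nonneg (mul_nonneg hx0.le ht.1) (sub_nonneg.mpr hx1.le)]
    rw [abs_of_nonneg h0w]; linarith
  -- continuity of Φ on [0,1]
  have hc2 : ContinuousOn (fun t : ℝ => Real.log (1 - t * x)) (Icc 0 1) := by
    apply ContinuousOn.log (by fun_prop)
    intro t ht; exact (hden t ht).ne'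
  have hwc : ContinuousOn (fun t : ℝ => x * (1 - t) / (1 - t * x)) (Icc 0 1) := by
    apply ContinuousOn.div (by fun_prop) (by fun_prop)
    intro t ht; exact (hden t ht).ne'
  have hLic : ContinuousOn (fun t : ℝ => Li 2 (x * (1 - t) / (1 - t * x))) (Icc 0 1) := by
    intro t ht
    have h1 : ContinuousWithinAt (Li 2 ∘ (fun t : ℝ => x * (1 - t) / (1 - t * x))) (Icc 0 1) t :=
      ContinuousAt.comp_continuousWithinAt (g := Li 2)
        (f := fun t : ℝ => x * (1 - t) / (1 - t * x)) (x := t)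
        ((hasDerivAt_Li2 (hwmem t ht)).continuousAt) (hwc t ht)
    exact h1
  -- the delicate term
  have hbound : ∀ t ∈ Icc (0:ℝ) 1,
      0 ≤ Real.log (1 - t) * (L - Real.log (1 - t * x)) ∧
      Real.log (1 - t) * (L - Real.log (1 - t * x))
        ≤ x / (1 - x) * (-(Real.log (1 - t) * (1 - t))) := by
    intro t ht
    rcases eq_or_lt_of_le ht.2 with h | h
    · subst h
      norm_num [hL]
    · have h1t : (0:ℝ) < 1 - t := by linarith
      have h1tx := hden t ht
      have hM : L ≤ Real.log (1 - t * x) := by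
        apply Real.log_le_log h1x; nlinarith [ht.1]
      have hlognp : Real.log (1 - t) ≤ 0 := Real.log_nonpos (by linarith) (by linarith [ht.1])
      constructor
      · have heq : Real.log (1 - t) * (L - Real.log (1 - t * x))
            = (-Real.log (1 - t)) * (Real.log (1 - t * x) - L) := by ring
        rw [heq]; exact mul_nonneg (by linarith) (by linarith)
      · have hML : Real.log (1 - t * x) - L = Real.log ((1 - t * x) / (1 - x)) := by
          rw [Real.log_div h1tx.ne' h1x.ne']
        have hub : Real.log ((1 - t * x) / (1 - x)) ≤ (1 - t * x) / (1 - x) - 1 :=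
          Real.log_le_sub_one_of_pos (by positivity)
        have heq2 : (1 - t * x) / (1 - x) - 1 = x * (1 - t) / (1 - x) := by
          field_simp
          ring
        have hle : Real.log (1 - t * x) - L ≤ x * (1 - t) / (1 - x) := by
          rw [hML]; linarith
        calc Real.log (1 - t) * (L - Real.log (1 - t * x))
            = (-Real.log (1 - t)) * (Real.log (1 - t * x) - L) := by ring
          _ ≤ (-Real.log (1 - t)) * (x * (1 - t) / (1 - x)) :=
              mul_le_mul_of_nonneg_left hle (by linarith)
          _ = x / (1 - x) * (-(Real.log (1 - t) * (1 - t))) := by ring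
  have hψ : ContinuousOn (fun t : ℝ => Real.log (1 - t) * (L - Real.log (1 - t * x)))
      (Icc 0 1) := by
    intro t ht
    rcases eq_or_lt_of_le ht.2 with h | h
    · subst h
      unfold ContinuousWithinAt
      rw [show ((fun t : ℝ => Real.log (1 - t) * (L - Real.log (1 - t * x))) 1) = 0 by
        norm_num [hL]]
      -- squeeze
      have hlim : Tendsto (fun u : ℝ => Real.log u * u) (𝓝[Ici (0:ℝ)] 0) (𝓝 0) := by
        rw [show Ici (0:ℝ) = insert 0 (Ioi 0) from Set.Ioi_insert.symm,
          nhdsWithin_insert]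
        apply Tendsto.sup
        · simpa using tendsto_pure_nhds (fun u : ℝ => Real.log u * u) 0
        · simpa using tendsto_log_mul_rpow_nhdsGT_zero one_pos
      have hsub : Tendsto (fun t : ℝ => 1 - t) (𝓝[Icc (0:ℝ) 1] 1) (𝓝[Ici (0:ℝ)] 0) := by
        apply tendsto_nhdsWithin_of_tendsto_nhds_of_eventually_within
        · have hcont1 : Continuous (fun t : ℝ => 1 - t) := by fun_prop
          have h0 := hcont1.tendsto 1
          norm_num at h0
          exact h0.mono_left nhdsWithin_le_nhds
        · filter_upwards [self_mem_nhdsWithin] with t ht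
          exact mem_Ici.mpr (by linarith [ht.2])
      have hg : Tendsto (fun t : ℝ => x / (1 - x) * (-(Real.log (1 - t) * (1 - t))))
          (𝓝[Icc (0:ℝ) 1] 1) (𝓝 0) := by
        have := ((hlim.comp hsub).neg).const_mul (x / (1 - x))
        simpa using this
      apply squeeze_zero'
      · filter_upwards [self_mem_nhdsWithin] with t ht
        exact (hbound t ht).1
      · filter_upwards [self_mem_nhdsWithin] with t ht
        exact (hbound t ht).2
      · exact hg
    · have hct : ContinuousAt (fun t : ℝ => Real.log (1 - t) * (L - Real.log (1 - t * x))) t := by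
        apply ContinuousAt.mul
        · exact ((continuous_const.sub continuous_id).continuousAt).log (by linarith : (1:ℝ) - t ≠ 0)
        · exact continuousAt_const.sub
            (((continuous_const.sub (continuous_id.mul continuous_const)).continuousAt).log
              (hden t ht).ne')
      exact hct.continuousWithinAt
  have hcont : ContinuousOn Φ (Icc 0 1) :=
    ((hψ.add hLic).sub (continuousOn_const.mul hc2)).add
      (continuousOn_const.mul (hc2.pow 2))
  -- derivative
  have hderiv : ∀ t ∈ Ioo (0:ℝ) 1, HasDerivAt Φ (Real.log (1 - t) * (x / (1 - t * x))) t := by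
    intro t ht
    obtain ⟨ht0, ht1⟩ := ht
    have h1t : (0:ℝ) < 1 - t := by linarith
    have h1tx : (0:ℝ) < 1 - t * x := by nlinarith
    have hA : HasDerivAt (fun t : ℝ => 1 - t) (-1) t := (hasDerivAt_id t).const_sub 1
    have hB : HasDerivAt (fun t : ℝ => 1 - t * x) (-x) t := by
      simpa using ((hasDerivAt_id t).mul_const x).const_sub 1
    have hlog1 : HasDerivAt (fun t : ℝ => Real.log (1 - t)) (-1 / (1 - t)) t := hA.log h1t.ne'
    have hlog2 : HasDerivAt (fun t : ℝ => Real.log (1 - t * x)) (-x / (1 - t * x)) t :=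
      hB.log h1tx.ne'
    have hw0 : (0:ℝ) < x * (1 - t) / (1 - t * x) := div_pos (mul_pos hx0 h1t) h1tx
    have hwx : x * (1 - t) / (1 - t * x) < 1 := by
      have : x * (1 - t) / (1 - t * x) ≤ x := by
        rw [div_le_iff₀ h1tx]
        nlinarith [mul_nonneg (mul_nonneg hx0.le ht0.le) (sub_nonneg.mpr hx1.le)]
      linarith
    have hwD : HasDerivAt (fun t : ℝ => x * (1 - t) / (1 - t * x))
        (x * (x - 1) / (1 - t * x) ^ 2) t := by
      have hnum : HasDerivAt (fun t : ℝ => x * (1 - t)) (-x) t := by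
        simpa using hA.const_mul x
      have h := hnum.div hB h1tx.ne'
      convert h using 1
      · rfl
      · rfl
      · rfl
      field_simp
      ring
    have hLiw : HasDerivAt (Li 2)
        (-Real.log (1 - x * (1 - t) / (1 - t * x)) / (x * (1 - t) / (1 - t * x)))
        (x * (1 - t) / (1 - t * x)) := hasDerivAt_Li2' hw0 hwx
    have h1w : 1 - x * (1 - t) / (1 - t * x) = (1 - x) / (1 - t * x) := by
      have h1tx' : 1 - x * t ≠ 0 := by rw [mul_comm]; exact h1tx.ne'
      field_simp
      ring
    rw [h1w, Real.log_div h1x.ne' h1tx.ne'] at hLiw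
    have hcomp : HasDerivAt (fun t : ℝ => Li 2 (x * (1 - t) / (1 - t * x)))
        ((-(Real.log (1 - x) - Real.log (1 - t * x)) / (x * (1 - t) / (1 - t * x)))
          * (x * (x - 1) / (1 - t * x) ^ 2)) t := by
          have h := hLiw.comp t hwD; exact h
    have hterm1 : HasDerivAt (fun t : ℝ => Real.log (1 - t) * (L - Real.log (1 - t * x)))
        ((-1 / (1 - t)) * (L - Real.log (1 - t * x))
          + Real.log (1 - t) * (-(-x / (1 - t * x)))) t :=
      hlog1.mul (hlog2.const_sub L)
    have hterm3 : HasDerivAt (fun t : ℝ => L * Real.log (1 - t * x))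
        (L * (-x / (1 - t * x))) t := hlog2.const_mul L
    have hterm4 : HasDerivAt (fun t : ℝ => (1/2) * Real.log (1 - t * x) ^ 2)
        ((1/2) * ((2:ℕ) * Real.log (1 - t * x) ^ 1 * (-x / (1 - t * x)))) t :=
      (hlog2.pow 2).const_mul (1/2)
    have hΦ := ((hterm1.add hcomp).sub hterm3).add hterm4
    convert hΦ using 1
    · rfl
    · rfl
    · rfl
    rw [hL]
    have hx0' : x ≠ 0 := hx0.ne'
    field_simp
    ring
  have hint : IntervalIntegrable (fun t : ℝ => Real.log (1 - t) * (x / (1 - t * x)))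
      volume 0 1 := intInt_aux x hx0 hx1
  have hftc := intervalIntegral.integral_eq_sub_of_hasDerivAt_of_le zero_le_one
    hcont hderiv hint
  rw [hftc]
  have hΦ0 : Φ 0 = Li 2 x := by
    simp [hΦdef, Real.log_one]
  have hΦ1 : Φ 1 = -(1/2) * L ^ 2 := by
    simp only [hΦdef]
    norm_num [hL, Li2_zero]
    try ring
  rw [hΦ0, hΦ1, hL]

/-- `∫₀¹ log(1-t)/((1-tx)(1-ty)) dt
  = (1/(x-y))·(½log(1-y)² - ½log(1-x)² - Li₂(x) + Li₂(y))` for `0 < x, y < 1`, `x ≠ y`. -/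
theorem stmt6 (x y : ℝ) (hx0 : 0 < x) (hx1 : x < 1) (hy0 : 0 < y) (hy1 : y < 1)
    (hxy : x ≠ y) :
    ∫ t in (0:ℝ)..1, Real.log (1 - t) / ((1 - t * x) * (1 - t * y)) =
      (1 / (x - y)) *
        ((1 / 2) * Real.log (1 - y) ^ 2 - (1 / 2) * Real.log (1 - x) ^ 2 - Li 2 x + Li 2 y) := by
  have hIx := intInt_aux x hx0 hx1
  have hIy := intInt_aux y hy0 hy1
  have hxy' : x - y ≠ 0 := sub_ne_zero.mpr hxy
  have hcongr : EqOn (fun t : ℝ => Real.log (1 - t) / ((1 - t * x) * (1 - t * y)))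
      (fun t : ℝ => (1 / (x - y)) * (Real.log (1 - t) * (x / (1 - t * x))
        - Real.log (1 - t) * (y / (1 - t * y)))) (uIcc 0 1) := by
    intro t ht
    rw [uIcc_of_le zero_le_one] at ht
    have h1 : (0:ℝ) < 1 - t * x := by nlinarith [ht.1, ht.2]
    have h2 : (0:ℝ) < 1 - t * y := by nlinarith [ht.1, ht.2]
    show Real.log (1 - t) / ((1 - t * x) * (1 - t * y)) = _
    field_simp
    ring
  rw [intervalIntegral.integral_congr hcongr, intervalIntegral.integral_const_mul,
    intervalIntegral.integral_sub hIx hIy, key x hx0 hx1, key y hy0 hy1]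
  ring
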